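/- Let p be a prime ideal of a commutative Noetherian ring R. Then p is a trace ideal of R (i.e., p = tr_R(p)) if and only if the localization R_p is not a discrete valuation ring. -/

import Mathlib

/-- The trace ideal of an `R`-module `M`. -/
def traceIdeal (R : Type*) [CommRing R] (M : Type*) [AddCommGroup M] [Module R M] : Ideal R :=
  ⨆ f : M →ₗ[R] R, LinearMap.range f


open IsLocalRing

lemma dvr_of_regular_principal_maximalIdeal (A : Type*) [CommRing A] [IsNoetherianRing A]
    [IsLocalRing A] (x : A) (hreg : ∀ a : A, a * x = 0 → a = 0)
    (hspan : maximalIdeal A = Ideal.span {x}) :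
    ∃ _h : IsDomain A, IsDiscreteValuationRing A := by
  have hx0 : x ≠ 0 := fun h => one_ne_zero (hreg 1 (by simp [h]))
  have hxpow : ∀ n : ℕ, x ^ n ≠ 0 := by
    intro n
    induction n with
    | zero => simpa using one_ne_zero
    | succ n ih => exact fun h => ih (hreg _ (by rwa [← pow_succ]))
  have hK : (⨅ n : ℕ, maximalIdeal A ^ n) = ⊥ :=
    Ideal.iInf_pow_eq_bot_of_isLocalRing _ (Ideal.IsMaximal.ne_top (maximalIdeal.isMaximal A))
  have hdecomp : ∀ a : A, a ≠ 0 → ∃ (n : ℕ) (u : A), IsUnit u ∧ a = u * x ^ n := by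
    intro a ha
    classical
    have hex : ∃ n, a ∉ maximalIdeal A ^ n := by
      by_contra h
      push_neg at h
      exact ha (by simpa [hK] using Ideal.mem_iInf.mpr h : a ∈ (⊥ : Ideal A))
    have hk0 : Nat.find hex ≠ 0 := by
      intro h
      exact (Nat.find_spec hex) (by simp [h])
    obtain ⟨n, hn⟩ : ∃ n, Nat.find hex = n + 1 := ⟨Nat.find hex - 1, by omega⟩
    have hmem : a ∈ maximalIdeal A ^ n := by
      by_contra h
      exact absurd (Nat.find_min' hex h) (by omega)
    have hnmem : a ∉ maximalIdeal A ^ (n + 1) := hn ▸ Nat.find_spec hex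
    rw [hspan, Ideal.span_singleton_pow] at hmem hnmem
    obtain ⟨u, hu⟩ := Ideal.mem_span_singleton'.mp hmem
    refine ⟨n, u, ?_, hu.symm⟩
    by_contra hunit
    have humem : u ∈ maximalIdeal A := (mem_maximalIdeal u).mpr (mem_nonunits_iff.mpr hunit)
    rw [hspan] at humem
    obtain ⟨d, hd⟩ := Ideal.mem_span_singleton'.mp humem
    exact hnmem (Ideal.mem_span_singleton'.mpr ⟨d, by rw [← hu, ← hd]; ring⟩)
  have : NoZeroDivisors A := by
    constructor
    intro a b hab
    by_contra h
    push_neg at h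
    obtain ⟨ha, hb⟩ := h
    obtain ⟨n, u, hu, rfl⟩ := hdecomp a ha
    obtain ⟨m, v, hv, rfl⟩ := hdecomp b hb
    have : (u * v) * x ^ (n + m) = 0 := by rw [← hab]; ring
    exact hxpow (n + m) ((hu.mul hv).mul_right_eq_zero.mp this)
  have hdom : IsDomain A := NoZeroDivisors.to_isDomain A
  have hprin : (maximalIdeal A).IsPrincipal := ⟨⟨x, hspan⟩⟩
  have hpid : IsPrincipalIdealRing A :=
    ((tfae_of_isNoetherianRing_of_isLocalRing_of_isDomain (R := A)).out 4 0).mp hprin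
  refine ⟨hdom, ?_⟩
  constructor
  rw [hspan]
  exact (Ideal.span_singleton_eq_bot).not.mpr hx0

section
variable {R : Type*} [CommRing R] (p : Ideal R) [p.IsPrime]

/-- Localization of an `R`-linear map `p →ₗ R` to a map `pₚ →ₗ[Rₚ] Rₚ`. -/
noncomputable def locMap (f : ↥p →ₗ[R] R) :
    LocalizedModule p.primeCompl ↥p →ₗ[Localization.AtPrime p] Localization.AtPrime p :=
  IsLocalizedModule.mapExtendScalars p.primeCompl (LocalizedModule.mkLinearMap p.primeCompl ↥p)
    (Algebra.linearMap R (Localization.AtPrime p)) (Localization.AtPrime p) f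

lemma locMap_mk (f : ↥p →ₗ[R] R) (x : ↥p) :
    locMap p f (LocalizedModule.mkLinearMap p.primeCompl ↥p x) =
      algebraMap R (Localization.AtPrime p) (f x) := by
  have := IsLocalizedModule.map_apply p.primeCompl (LocalizedModule.mkLinearMap p.primeCompl ↥p)
    (Algebra.linearMap R (Localization.AtPrime p)) f x
  simpa [locMap] using this

lemma locMap_subtype_mk (x : ↥p) :
    locMap p (Submodule.subtype p) (LocalizedModule.mkLinearMap p.primeCompl ↥p x) =
      algebraMap R (Localization.AtPrime p) (x : R) := by
  rw [locMap_mk]; rfl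

lemma exists_smul_eq_mk (y : LocalizedModule p.primeCompl ↥p) :
    ∃ (x : ↥p) (s : p.primeCompl),
      algebraMap R (Localization.AtPrime p) s • y = LocalizedModule.mkLinearMap p.primeCompl ↥p x := by
  obtain ⟨⟨x, s⟩, h⟩ := IsLocalizedModule.surj p.primeCompl
    (LocalizedModule.mkLinearMap p.primeCompl ↥p) y
  exact ⟨x, s, by rwa [algebraMap_smul]⟩

lemma unit_mul_mem_maximalIdeal {w : Localization.AtPrime p} (s : p.primeCompl)
    (h : algebraMap R (Localization.AtPrime p) s * w ∈ maximalIdeal (Localization.AtPrime p)) :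
    w ∈ maximalIdeal (Localization.AtPrime p) := by
  have hu := IsLocalization.map_units (Localization.AtPrime p) s
  have : w = ↑hu.unit⁻¹ * (algebraMap R (Localization.AtPrime p) s * w) := by
    rw [← mul_assoc, IsUnit.val_inv_mul, one_mul]
  rw [this]
  exact Ideal.mul_mem_left _ _ h

lemma range_locMap_subtype :
    LinearMap.range (locMap p (Submodule.subtype p)) =
      maximalIdeal (Localization.AtPrime p) := by
  apply le_antisymm
  · rintro w ⟨y, rfl⟩
    obtain ⟨x, s, hxs⟩ := exists_smul_eq_mk p y
    apply unit_mul_mem_maximalIdeal p s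
    have : algebraMap R (Localization.AtPrime p) s * locMap p (Submodule.subtype p) y
        = algebraMap R (Localization.AtPrime p) (x : R) := by
      rw [← smul_eq_mul, ← map_smul, hxs, locMap_mk]
      rfl
    rw [this, ← Localization.AtPrime.map_eq_maximalIdeal]
    exact Ideal.mem_map_of_mem _ x.2
  · rw [← Localization.AtPrime.map_eq_maximalIdeal, Ideal.map, Ideal.span_le]
    rintro w ⟨x, hx, rfl⟩
    exact ⟨LocalizedModule.mkLinearMap p.primeCompl ↥p ⟨x, hx⟩, by rw [locMap_mk]; rfl⟩

lemma injective_locMap_subtype : Function.Injective (locMap p (Submodule.subtype p)) := by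
  rw [← LinearMap.ker_eq_bot]
  apply (Submodule.eq_bot_iff _).mpr
  intro y hy
  rw [LinearMap.mem_ker] at hy
  obtain ⟨x, s, hxs⟩ := exists_smul_eq_mk p y
  have hx0 : algebraMap R (Localization.AtPrime p) (x : R) = 0 := by
    have hmk := locMap_mk p (Submodule.subtype p) x
    rw [Submodule.subtype_apply] at hmk
    rw [← hmk, ← hxs, map_smul, hy, smul_zero]
  obtain ⟨t, ht⟩ := (IsLocalization.map_eq_zero_iff p.primeCompl _ _).mp hx0
  have h1 : ((t : R) • x : ↥p) = 0 := Subtype.ext (by simpa using ht)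
  have h2 : (algebraMap R (Localization.AtPrime p) ↑(t * s)) • y = 0 := by
    rw [Submonoid.coe_mul, map_mul, mul_smul, hxs, algebraMap_smul, ← map_smul, h1, map_zero]
  have hu := IsLocalization.map_units (Localization.AtPrime p) (t * s)
  calc y = ((hu.unit⁻¹ : (Localization.AtPrime p)ˣ) : Localization.AtPrime p) • ((algebraMap R (Localization.AtPrime p) ↑(t * s)) • y) := by
            rw [← mul_smul, IsUnit.val_inv_mul, one_smul]
    _ = 0 := by rw [h2, smul_zero]

end

lemma unitSmulCancel {A : Type*} [CommRing A] {M : Type*} [AddCommGroup M] [Module A M]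
    {c : A} (hc : IsUnit c) {a b : M} (h : c • a = c • b) : a = b := by
  have := congrArg (fun m => ((hc.unit⁻¹ : Aˣ) : A) • m) h
  simpa [← mul_smul, IsUnit.val_inv_mul] using this

lemma dvr_of_exists_hom (R : Type*) [CommRing R] [IsNoetherianRing R] (p : Ideal R) [p.IsPrime]
    (f : ↥p →ₗ[R] R) (hf : ¬ LinearMap.range f ≤ p) :
    ∃ _h : IsDomain (Localization.AtPrime p), IsDiscreteValuationRing (Localization.AtPrime p) := by
  haveI : IsNoetherianRing (Localization.AtPrime p) :=
    IsLocalization.isNoetherianRing p.primeCompl _ inferInstance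
  set Rₚ := Localization.AtPrime p with hRₚdef
  set P := LocalizedModule p.primeCompl ↥p with hPdef
  set fP := LocalizedModule.mkLinearMap p.primeCompl ↥p with hfPdef
  set ι := locMap p (Submodule.subtype p) with hιdef
  set g := locMap p f with hgdef
  obtain ⟨w, hwr, hwp⟩ := SetLike.not_le_iff_exists.mp hf
  obtain ⟨xa, rfl⟩ := hwr
  have hgsurj : Function.Surjective g := by
    rw [← LinearMap.range_eq_top]
    apply Ideal.eq_top_of_isUnit_mem _
      (⟨fP xa, locMap_mk p f xa⟩ : algebraMap R Rₚ (f xa) ∈ LinearMap.range g)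
    exact IsLocalization.map_units Rₚ (⟨f xa, hwp⟩ : p.primeCompl)
  obtain ⟨x₀, hx₀⟩ := hgsurj 1
  have key : ∀ (y z : P) (x x' : ↥p) (s t : p.primeCompl),
      algebraMap R Rₚ s • y = fP x → algebraMap R Rₚ t • z = fP x' →
      (algebraMap R Rₚ s * algebraMap R Rₚ t) • (ι y • z) = fP ((x : R) • x') := by
    intro y z x x' s t hx hx'
    have h1 : algebraMap R Rₚ ↑s * ι y = algebraMap R Rₚ (x : R) := by
      rw [← smul_eq_mul, ← map_smul, hx, locMap_subtype_mk]
    calc (algebraMap R Rₚ ↑s * algebraMap R Rₚ ↑t) • (ι y • z)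
        = (algebraMap R Rₚ ↑s * ι y) • (algebraMap R Rₚ ↑t • z) := by
          rw [smul_smul, smul_smul, mul_right_comm]
      _ = (algebraMap R Rₚ (x : R)) • fP x' := by rw [h1, hx']
      _ = fP ((x : R) • x') := by rw [algebraMap_smul, map_smul]
  have hcomm : ∀ y z : P, ι y • z = ι z • y := by
    intro y z
    obtain ⟨x, s, hx⟩ := exists_smul_eq_mk p y
    obtain ⟨x', t, hx'⟩ := exists_smul_eq_mk p z
    apply unitSmulCancel ((IsLocalization.map_units Rₚ s).mul (IsLocalization.map_units Rₚ t))
    rw [key y z x x' s t hx hx']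
    have h2 := key z y x' x t s hx' hx
    rw [mul_comm (algebraMap R Rₚ ↑t) (algebraMap R Rₚ ↑s)] at h2
    rw [h2]
    congr 1
    exact Subtype.ext (by simp [mul_comm])
  have hker : ∀ z : P, g z = 0 → ι z = 0 := by
    intro z hz
    have h2 : g (ι z • x₀) = ι z := by rw [map_smul, hx₀, smul_eq_mul, mul_one]
    have h3 : g (ι x₀ • z) = 0 := by rw [map_smul, hz, smul_zero]
    rw [← h2, hcomm z x₀, h3]
  have hy : ∀ y : P, ι y = g y * ι x₀ := by
    intro y
    have hz : g (y - g y • x₀) = 0 := by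
      rw [map_sub, map_smul, hx₀, smul_eq_mul, mul_one, sub_self]
    have h4 := hker _ hz
    rw [map_sub, map_smul, smul_eq_mul, sub_eq_zero] at h4
    exact h4
  have hinj : Function.Injective ι := injective_locMap_subtype p
  have hreg : ∀ a : Rₚ, a * ι x₀ = 0 → a = 0 := by
    intro a ha
    have h5 : ι (a • x₀) = ι 0 := by rw [map_smul, smul_eq_mul, ha, map_zero]
    have h0 : a • x₀ = 0 := hinj h5
    have h6 := congrArg g h0
    rwa [map_smul, hx₀, smul_eq_mul, mul_one, map_zero] at h6
  have hspan : maximalIdeal Rₚ = Ideal.span {ι x₀} := by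
    apply le_antisymm
    · intro w hw
      rw [← range_locMap_subtype p] at hw
      obtain ⟨y, rfl⟩ := hw
      exact Ideal.mem_span_singleton'.mpr ⟨g y, (hy y).symm⟩
    · rw [Ideal.span_le, Set.singleton_subset_iff]
      rw [show ((maximalIdeal Rₚ : Ideal Rₚ) : Set Rₚ) = (LinearMap.range ι : Set Rₚ) by
        rw [range_locMap_subtype p]]
      exact ⟨x₀, rfl⟩
  exact dvr_of_regular_principal_maximalIdeal Rₚ (ι x₀) hreg hspan

lemma exists_hom_of_dvr (R : Type*) [CommRing R] [IsNoetherianRing R] (p : Ideal R) [p.IsPrime]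
    (h : ∃ _h : IsDomain (Localization.AtPrime p),
        IsDiscreteValuationRing (Localization.AtPrime p)) :
    ∃ f : ↥p →ₗ[R] R, ¬ LinearMap.range f ≤ p := by
  obtain ⟨hdom, hdvr⟩ := h
  haveI := hdom; haveI := hdvr
  set Rₚ := Localization.AtPrime p with hRₚdef
  set P := LocalizedModule p.primeCompl ↥p with hPdef
  set fP := LocalizedModule.mkLinearMap p.primeCompl ↥p with hfPdef
  set ι := locMap p (Submodule.subtype p) with hιdef
  obtain ⟨π, hπ⟩ := Submodule.IsPrincipal.principal (maximalIdeal Rₚ)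
  have hπ0 : π ≠ 0 := by
    intro h0
    exact IsDiscreteValuationRing.not_a_field Rₚ
      (by rw [hπ, h0, Submodule.span_zero_singleton])
  set μ : Rₚ →ₗ[Rₚ] Rₚ := π • LinearMap.id with hμdef
  have hμ : ∀ c, μ c = π * c := fun c => by simp [hμdef, smul_eq_mul]
  have hμinj : Function.Injective μ := by
    intro a b hab
    rw [hμ, hμ] at hab
    exact mul_left_cancel₀ hπ0 hab
  have hsub : ∀ y : P, ι y ∈ LinearMap.range μ := by
    intro y
    have h1 : ι y ∈ maximalIdeal Rₚ := by
      rw [← range_locMap_subtype p]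
      exact ⟨y, rfl⟩
    rw [hπ] at h1
    obtain ⟨c, hc⟩ := Submodule.mem_span_singleton.mp h1
    exact ⟨c, by rw [hμ, mul_comm, ← smul_eq_mul, hc]⟩
  set e := LinearEquiv.ofInjective μ hμinj with hedef
  set g : P →ₗ[Rₚ] Rₚ :=
    e.symm.toLinearMap ∘ₗ LinearMap.codRestrict (LinearMap.range μ) ι hsub with hgdef
  have hg : ∀ y, π * g y = ι y := by
    intro y
    have h1 : e (g y) = ⟨ι y, hsub y⟩ := by
      rw [hgdef]
      exact e.apply_symm_apply _
    calc π * g y = μ (g y) := (hμ _).symm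
      _ = ↑(e (g y)) := by rw [hedef]; rfl
      _ = ι y := by rw [h1]
  have hsurj : Function.Surjective g := by
    have hπmem : π ∈ maximalIdeal Rₚ := hπ ▸ Submodule.mem_span_singleton_self π
    rw [← range_locMap_subtype p] at hπmem
    obtain ⟨y₀, hy₀⟩ := hπmem
    have hg1 : g y₀ = 1 := mul_left_cancel₀ hπ0 (by rw [hg, hy₀, mul_one])
    intro c
    exact ⟨c • y₀, by rw [map_smul, hg1, smul_eq_mul, mul_one]⟩
  haveI : Module.Finite R ↥p := Module.Finite.iff_fg.mpr (IsNoetherian.noetherian p)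
  haveI : Module.FinitePresentation R ↥p := Module.finitePresentation_of_finite R ↥p
  obtain ⟨⟨f, s⟩, hfs⟩ := IsLocalizedModule.surj p.primeCompl
    (IsLocalizedModule.mapExtendScalars p.primeCompl fP (Algebra.linearMap R Rₚ) Rₚ) g
  have hfs' : s • g = locMap p f := hfs
  refine ⟨f, fun hle => ?_⟩
  have hmem : ∀ y : P, locMap p f y ∈ maximalIdeal Rₚ := by
    intro y
    obtain ⟨x, t, hxt⟩ := exists_smul_eq_mk p y
    apply unit_mul_mem_maximalIdeal p t
    rw [← smul_eq_mul, ← map_smul, hxt, locMap_mk, ← Localization.AtPrime.map_eq_maximalIdeal]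
    exact Ideal.mem_map_of_mem _ (hle ⟨x, rfl⟩)
  have hus := IsLocalization.map_units Rₚ s
  obtain ⟨y₁, hy₁⟩ := hsurj ((hus.unit⁻¹ : Rₚˣ) : Rₚ)
  have hone : locMap p f y₁ = 1 := by
    rw [← hfs', LinearMap.smul_apply, hy₁, Submonoid.smul_def, Algebra.smul_def,
      IsUnit.mul_val_inv]
  exact (Ideal.IsMaximal.ne_top (maximalIdeal.isMaximal Rₚ))
    (Ideal.eq_top_iff_one _ |>.mpr (hone ▸ hmem y₁))


/-- A prime ideal `p` of a commutative Noetherian ring `R` is a trace ideal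
(i.e. `p = tr_R(p)`) if and only if the localization `R_p` is not a discrete
valuation ring. -/
theorem prime_isTraceIdeal_iff_not_dvr (R : Type*) [CommRing R] [IsNoetherianRing R]
    (p : Ideal R) [p.IsPrime] :
    traceIdeal R p = p ↔
      ¬ ∃ _h : IsDomain (Localization.AtPrime p),
          IsDiscreteValuationRing (Localization.AtPrime p) := by
  constructor
  · intro htr hdvr
    obtain ⟨f, hf⟩ := exists_hom_of_dvr R p hdvr
    have hle : LinearMap.range f ≤ traceIdeal R ↥p :=
      le_iSup (fun f : ↥p →ₗ[R] R => LinearMap.range f) f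
    rw [htr] at hle
    exact hf hle
  · intro hnot
    apply le_antisymm
    · apply iSup_le
      intro f
      by_contra hf
      exact hnot (dvr_of_exists_hom R p f hf)
    · calc p = LinearMap.range (Submodule.subtype p) := (Submodule.range_subtype p).symm
        _ ≤ traceIdeal R ↥p := le_iSup (fun f : ↥p →ₗ[R] R => LinearMap.range f) (Submodule.subtype p)
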